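/- If a single-decision CID G contains a directed path from A through X to some utility node, then there exists a SCIM compatible with G and an action a such that E[𝒰_{X_a}] ≠ E[𝒰] for the optimal policy; i.e., the graphical criterion is complete: such a CID admits an instrumental control incentive on X. -/

import Mathlib

open Relation

/-- Expected total utility of a value assignment, with an explicit `Fintype` instance. -/
def expUtil {V D Ω : Type} (iΩ : Fintype Ω) (P : Ω → ℝ) (U : Finset V)
    (util : V → D → ℝ) (val : V → Ω → D) : ℝ :=
  ∑ ω ∈ @Finset.univ Ω iΩ, P ω * ∑ u ∈ U, util u (val u ω)

/-- completeness of the graphical ICI criterion: if a single-decision CID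
contains a directed path from the decision `A` through `X` to some utility node `u`, then
there exists a compatible SCIM (structural functions respecting the parent sets of the
graph), a policy `π` optimal for it, and an action `a` such that
`E[𝒰_{X_a}] ≠ E[𝒰]` — the CID admits an instrumental control incentive on `X`. -/
theorem stmt16 {V : Type} [Fintype V] [DecidableEq V]
    (E : V → V → Prop)
    (hacyclic : ∀ v w : V, ReflTransGen E v w → ReflTransGen E w v → v = w)
    (A X : V) (U : Finset V) (u : V) (hu : u ∈ U) (hXA : X ≠ A)
    (hpath1 : TransGen E A X) (hpath2 : ReflTransGen E X u) :
    ∃ (D Ω : Type) (iΩ : Fintype Ω)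
      (P : Ω → ℝ)
      (f : V → (V → D) → Ω → D)
      (π : (V → D) → D)
      (util : V → D → ℝ)
      (vπ : V → Ω → D) (a : D) (va vX : V → Ω → D),
      (∀ ω, 0 ≤ P ω) ∧ (∑ ω ∈ @Finset.univ Ω iΩ, P ω) = 1 ∧
      -- the structural functions and the policy respect the parent sets of the graph
      (∀ v g g' ω, (∀ p, E p v → g p = g' p) → f v g ω = f v g' ω) ∧
      (∀ g g', (∀ p, E p A → g p = g' p) → π g = π g') ∧
      -- vπ is the natural solution under the policy π
      (∀ v ω, vπ v ω =
        if v = A then π (fun p => vπ p ω) else f v (fun p => vπ p ω) ω) ∧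
      -- the policy π is optimal
      (∀ (π' : (V → D) → D) (vπ' : V → Ω → D),
        (∀ v ω, vπ' v ω =
          if v = A then π' (fun p => vπ' p ω) else f v (fun p => vπ' p ω) ω) →
        expUtil iΩ P U util vπ' ≤ expUtil iΩ P U util vπ) ∧
      -- va solves do(A = a); vX is the nested solution under do(X = X_a) with policy π
      (∀ v ω, va v ω = if v = A then a else f v (fun p => va p ω) ω) ∧
      (∀ v ω, vX v ω =
        if v = X then va X ω
        else if v = A then π (fun p => vX p ω)
        else f v (fun p => vX p ω) ω) ∧
      -- the instrumental control incentive on X: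
      expUtil iΩ P U util vX ≠ expUtil iΩ P U util vπ := by
  classical
  -- restricted edge relations
  set E' : V → V → Prop := fun p q => E p q ∧ (ReflTransGen E q X ∨ ReflTransGen E X p) with hE'
  set E'' : V → V → Prop := fun p q => E' p q ∧ q ≠ X with hE''
  have lemA : TransGen E' A X := by
    have : ∀ v, TransGen E v X → TransGen E' v X := by
      intro v h
      induction h using TransGen.head_induction_on with
      | single h => exact TransGen.single ⟨h, Or.inl ReflTransGen.refl⟩
      | head h h' ih => exact TransGen.head ⟨h, Or.inl h'.to_reflTransGen⟩ ih
    exact this A hpath1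
  have lemB : ReflTransGen E' X u := by
    have : ∀ w, ReflTransGen E X w → ReflTransGen E' X w := by
      intro w h
      induction h with
      | refl => exact ReflTransGen.refl
      | tail hab hbc ih => exact ih.tail ⟨hbc, Or.inr hab⟩
    exact this u hpath2
  have h1 : ReflTransGen E' A u := lemA.to_reflTransGen.trans lemB
  have lemC : ∀ v, ReflTransGen E'' A v → v ≠ X ∧ ReflTransGen E v X := by
    intro v h
    induction h with
    | refl => exact ⟨Ne.symm hXA, hpath1.to_reflTransGen⟩
    | tail hab hbc ih =>
      obtain ⟨hb, hbX⟩ := ih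
      obtain ⟨⟨hEbc, hor⟩, hcX⟩ := hbc
      refine ⟨hcX, ?_⟩
      rcases hor with h | h
      · exact h
      · exact absurd (hacyclic _ X hbX h) hb
  have h3 : ¬ (u ≠ X ∧ ReflTransGen E'' A u) := by
    rintro ⟨hne, h⟩
    exact hne (hacyclic u X (lemC u h).2 hpath2)
  -- the model
  refine ⟨Bool, Unit, inferInstance, fun _ => 1,
    fun v g _ => decide (∃ p, E' p v ∧ g p = true),
    fun _ => true,
    fun w d => if w = u then (if d then 1 else 0) else 0,
    fun v _ => decide (ReflTransGen E' A v),
    false, fun _ _ => false,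
    fun v _ => decide (v ≠ X ∧ ReflTransGen E'' A v),
    ?_, ?_, ?_, ?_, ?_, ?_, ?_, ?_, ?_⟩
  · intro ω; norm_num
  · simp
  · -- f respects parents
    intro v g g' ω h
    simp only [decide_eq_decide]
    constructor
    · rintro ⟨p, hp, hgp⟩; exact ⟨p, hp, (h p hp.1) ▸ hgp⟩
    · rintro ⟨p, hp, hgp⟩; exact ⟨p, hp, (h p hp.1) ▸ hgp⟩
  · intro g g' _; rfl
  · -- vπ fixed point
    intro v ω
    by_cases hv : v = A
    · subst hv; simp [ReflTransGen.refl]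
    · rw [if_neg hv]
      simp only [decide_eq_decide, decide_eq_true_eq]
      constructor
      · intro h
        rcases h.cases_tail with h' | ⟨c, hc, hcv⟩
        · exact absurd h' hv
        · exact ⟨c, hcv, hc⟩
      · rintro ⟨p, hpv, hp⟩; exact hp.tail hpv
  · -- optimality
    intro π' vπ' _
    have key : ∀ val : V → Unit → Bool,
        expUtil (inferInstance : Fintype Unit) (fun _ => (1:ℝ)) U
          (fun w d => if w = u then (if d then 1 else 0) else 0) val
        = if val u () then 1 else 0 := by
      intro val
      simp only [expUtil, Finset.univ_unique, Finset.sum_singleton, one_mul]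
      rw [Finset.sum_ite_eq' U u (fun w => if val w () then (1:ℝ) else 0), if_pos hu]
    rw [key, key]
    have hπu : ReflTransGen E' A u := h1
    simp only [decide_eq_true_eq, hπu, if_true]
    split <;> norm_num
  · -- va fixed point
    intro v ω
    by_cases hv : v = A <;> simp [hv]
  · -- vX fixed point
    intro v ω
    by_cases hvX : v = X
    · subst hvX; simp
    · by_cases hvA : v = A
      · subst hvA
        simp [hvX, Ne.symm hXA, ReflTransGen.refl]
      · rw [if_neg hvX, if_neg hvA]
        simp only [decide_eq_decide, decide_eq_true_eq]
        constructor
        · rintro ⟨-, h⟩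
          rcases h.cases_tail with h' | ⟨c, hc, hcv⟩
          · exact absurd h' hvA
          · exact ⟨c, hcv.1, (lemC c hc).1, hc⟩
        · rintro ⟨p, hpv, hpX, hp⟩
          exact ⟨hvX, hp.tail ⟨hpv, hvX⟩⟩
  · -- the incentive
    have key : ∀ val : V → Unit → Bool,
        expUtil (inferInstance : Fintype Unit) (fun _ => (1:ℝ)) U
          (fun w d => if w = u then (if d then 1 else 0) else 0) val
        = if val u () then 1 else 0 := by
      intro val
      simp only [expUtil, Finset.univ_unique, Finset.sum_singleton, one_mul]
      rw [Finset.sum_ite_eq' U u (fun w => if val w () then (1:ℝ) else 0), if_pos hu]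
    rw [key, key]
    simp only [decide_eq_true_eq, h1, if_true, h3, if_false]
    norm_num
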